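/- Let X be a diametrically regular metric space, μ a measure over X, α > 0, c_α > 0, and A ⊆ X a set such that (ℱ_b)_{μ,ζ_{b,α}} covers A finely. Then for every x ∈ A the spherical Federer density equals the Federer density computed with open balls: 𝔰^α(μ,x) = F^{ζ_{o,α}}(μ,x), where ζ_{o,α} is the gauge B ↦ c_α·diam(B)^α on the family ℱ_o of open balls of X. -/

import Mathlib

open MeasureTheory Set ENNReal Filter Topology

noncomputable section

/-- The subclass `𝒮_{μ,ζ}` of a class of sets `𝒮`, obtained by removing the sets `S`
where `ζ S = μ S = 0` or `ζ S = μ S = +∞`. -/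
def goodClass {X : Type*} [MetricSpace X] (μ : OuterMeasure X) (𝒮 : Set (Set X))
    (ζ : Set X → ℝ≥0∞) : Set (Set X) :=
  {S ∈ 𝒮 | ¬ ((ζ S = 0 ∧ μ S = 0) ∨ (ζ S = ⊤ ∧ μ S = ⊤))}

/-- The quotient function `Q_{μ,ζ}`: equals `+∞` if `ζ S = 0`, `μ S / ζ S` if
`0 < ζ S < +∞`, and `0` if `ζ S = +∞` (note `a / ⊤ = 0` in `ℝ≥0∞`). -/
def fedQuot {X : Type*} [MetricSpace X] (μ : OuterMeasure X) (ζ : Set X → ℝ≥0∞)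
    (S : Set X) : ℝ≥0∞ :=
  if ζ S = 0 then ⊤ else μ S / ζ S

/-- A family of sets `ℱ` covers `A` finely: for every `a ∈ A` and every `ε > 0` there is
`S ∈ ℱ` containing `a` with `diam S < ε`. -/
def CoversFinely {X : Type*} [MetricSpace X] (ℱ : Set (Set X)) (A : Set X) : Prop :=
  ∀ a ∈ A, ∀ ε : ℝ≥0∞, 0 < ε → ∃ S ∈ ℱ, a ∈ S ∧ EMetric.diam S < ε

/-- The Federer density `F^ζ(μ,x)`. -/
def federerDensity {X : Type*} [MetricSpace X] (μ : OuterMeasure X) (𝒮 : Set (Set X))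
    (ζ : Set X → ℝ≥0∞) (x : X) : ℝ≥0∞ :=
  ⨅ (ε : ℝ≥0∞) (_ : 0 < ε),
    ⨆ (S : Set X) (_ : S ∈ goodClass μ 𝒮 ζ) (_ : x ∈ S) (_ : EMetric.diam S < ε),
      fedQuot μ ζ S

/-- The size-`δ` premeasure `φ_{ζ,δ}` of the Carathéodory construction. -/
def preCarMeasure {X : Type*} [MetricSpace X] (𝒮 : Set (Set X)) (ζ : Set X → ℝ≥0∞)
    (δ : ℝ≥0∞) (R : Set X) : ℝ≥0∞ :=
  ⨅ (E : ℕ → Set X) (_ : ∀ j, E j ∈ 𝒮) (_ : ∀ j, EMetric.diam (E j) ≤ δ)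
    (_ : R ⊆ ⋃ j, E j), ∑' j, ζ (E j)

/-- The Carathéodory measure `ψ_ζ`. -/
def carMeasure {X : Type*} [MetricSpace X] (𝒮 : Set (Set X)) (ζ : Set X → ℝ≥0∞)
    (R : Set X) : ℝ≥0∞ :=
  ⨆ (δ : ℝ≥0∞) (_ : 0 < δ), preCarMeasure 𝒮 ζ δ R

/-- The `τ`-enlargement `Ŝ` of a set `S`. -/
def enlargement {X : Type*} [MetricSpace X] (μ : OuterMeasure X) (𝒮 : Set (Set X))
    (ζ : Set X → ℝ≥0∞) (τ : ℝ) (S : Set X) : Set X :=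
  ⋃₀ {T ∈ goodClass μ 𝒮 ζ | (T ∩ S).Nonempty ∧
      EMetric.diam T ≤ ENNReal.ofReal τ * EMetric.diam S}

/-- `μ` is a regular (outer) measure: every set is contained in a `μ`-measurable set of
the same measure. -/
def IsRegularOM {X : Type*} [MetricSpace X] (μ : OuterMeasure X) : Prop :=
  ∀ E : Set X, ∃ F : Set X, E ⊆ F ∧ μ.IsCaratheodory F ∧ μ F = μ E

/-- `μ` is a Borel (outer) measure: every Borel set is `μ`-measurable. -/
def IsBorelOM {X : Type*} [MetricSpace X] (μ : OuterMeasure X) : Prop :=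
  ∀ E : Set X, MeasurableSet[borel X] E → μ.IsCaratheodory E

/-- `μ` is a Borel regular (outer) measure. -/
def IsBorelRegularOM {X : Type*} [MetricSpace X] (μ : OuterMeasure X) : Prop :=
  IsBorelOM μ ∧ ∀ E : Set X, ∃ B : Set X, E ⊆ B ∧ MeasurableSet[borel X] B ∧ μ B = μ E

/-- Carathéodory measurability of a set with respect to a set function. -/
def SetFnCaratheodory {X : Type*} (ν : Set X → ℝ≥0∞) (E : Set X) : Prop :=
  ∀ T : Set X, ν T = ν (T ∩ E) + ν (T \ E)

/-- `μ⌊A << ν⌊A`: absolute continuity of the restrictions to `A`. -/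
def AbsContOn {X : Type*} [MetricSpace X] (μ : OuterMeasure X) (ν : Set X → ℝ≥0∞)
    (A : Set X) : Prop :=
  ∀ E : Set X, ν (A ∩ E) = 0 → μ (A ∩ E) = 0

/-- `S` is σ-finite with respect to the set function `ν`. -/
def SigmaFiniteWrt {X : Type*} (ν : Set X → ℝ≥0∞) (S : Set X) : Prop :=
  ∃ E : ℕ → Set X, S ⊆ ⋃ j, E j ∧ ∀ j, ν (E j) < ⊤

/-- The integral `∫_B f dν` with respect to an (outer) set function `ν`,
via the layer-cake formula. -/
def omIntegral {X : Type*} (ν : Set X → ℝ≥0∞) (B : Set X) (f : X → ℝ≥0∞) : ℝ≥0∞ :=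
  ∫⁻ t in Set.Ioi (0 : ℝ), ν {x ∈ B | ENNReal.ofReal t < f x}

/-- The enlargement condition: there are `c ≥ 1` and `η > 0` such that every
`S ∈ 𝒮_{μ,ζ}` admits `S̃ ∈ 𝒮` with `Ŝ ⊆ S̃`, `diam S̃ ≤ c diam S` and `ζ S̃ ≤ η ζ S`. -/
def EnlCondition {X : Type*} [MetricSpace X] (μ : OuterMeasure X) (𝒮 : Set (Set X))
    (ζ : Set X → ℝ≥0∞) (τ : ℝ) : Prop :=
  ∃ c : ℝ, 1 ≤ c ∧ ∃ η : ℝ, 0 < η ∧ ∀ S ∈ goodClass μ 𝒮 ζ, ∃ S' ∈ 𝒮,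
    enlargement μ 𝒮 ζ τ S ⊆ S' ∧ EMetric.diam S' ≤ ENNReal.ofReal c * EMetric.diam S ∧
      ζ S' ≤ ENNReal.ofReal η * ζ S

/-- The gauge `ζ_α(S) = c_α (diam S)^α`. -/
def zetaDiam {X : Type*} [MetricSpace X] (cα α : ℝ) (S : Set X) : ℝ≥0∞ :=
  ENNReal.ofReal cα * EMetric.diam S ^ α

/-- The family `ℱ` of closed subsets of `X`. -/
def closedSets (X : Type*) [MetricSpace X] : Set (Set X) := {S | IsClosed S}

/-- The family `ℱ_b` of closed balls of `X` (with positive radius). -/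
def closedBalls (X : Type*) [MetricSpace X] : Set (Set X) :=
  {S | ∃ (y : X) (r : ℝ), 0 < r ∧ S = Metric.closedBall y r}

/-- The family `ℱ_o` of open balls of `X` (with positive radius). -/
def openBalls (X : Type*) [MetricSpace X] : Set (Set X) :=
  {S | ∃ (y : X) (r : ℝ), 0 < r ∧ S = Metric.ball y r}

/-- The `α`-dimensional Hausdorff measure `ℋ^α` with normalizing constant `c_α`. -/
def hausdorffMeasureC (X : Type*) [MetricSpace X] (cα α : ℝ) : Set X → ℝ≥0∞ :=
  carMeasure (closedSets X) (zetaDiam cα α)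

/-- The `α`-dimensional spherical Hausdorff measure `𝒮^α` with constant `c_α`. -/
def sphericalMeasureC (X : Type*) [MetricSpace X] (cα α : ℝ) : Set X → ℝ≥0∞ :=
  carMeasure (closedBalls X) (zetaDiam cα α)

/-- `X` is diametrically regular. -/
def DiametricallyRegular (X : Type*) [MetricSpace X] : Prop :=
  ∀ x : X, ∃ R > (0 : ℝ), ∃ δ > (0 : ℝ), ∀ y ∈ Metric.ball x R,
    ContinuousOn (fun r : ℝ => EMetric.diam (Metric.ball y r)) (Set.Ioo 0 δ)

end

section Aux

variable {X : Type*} [MetricSpace X]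

lemma zetaDiam_ne_top {cα α : ℝ} (hα : 0 < α) {S : Set X} (h : EMetric.diam S ≠ ⊤) :
    zetaDiam cα α S ≠ ⊤ :=
  ENNReal.mul_ne_top ENNReal.ofReal_ne_top (ENNReal.rpow_ne_top_of_nonneg hα.le h)

lemma closedBall_renorm {S : Set X} (hS : ∃ (y : X) (r : ℝ), 0 < r ∧ S = Metric.closedBall y r)
    (hd : EMetric.diam S ≠ ⊤) {u : ℝ} (hu : (EMetric.diam S).toReal < u) :
    ∃ y ρ, 0 < ρ ∧ ρ ≤ u ∧ S = Metric.closedBall y ρ := by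
  obtain ⟨y, r, hr, rfl⟩ := hS
  refine ⟨y, min r u, lt_min hr (lt_of_le_of_lt ENNReal.toReal_nonneg hu), min_le_right _ _, ?_⟩
  apply Subset.antisymm
  · intro z hz
    have hzy : edist z y ≤ EMetric.diam (Metric.closedBall y r) :=
      EMetric.edist_le_diam_of_mem hz (Metric.mem_closedBall_self hr.le)
    have h2 : dist z y ≤ (EMetric.diam (Metric.closedBall y r)).toReal := by
      rw [dist_edist]; exact ENNReal.toReal_mono hd hzy
    exact Metric.mem_closedBall.mpr (le_min (Metric.mem_closedBall.mp hz) (h2.trans hu.le))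
  · exact Metric.closedBall_subset_closedBall (min_le_left _ _)

lemma openBall_renorm {S : Set X} (hS : ∃ (y : X) (r : ℝ), 0 < r ∧ S = Metric.ball y r)
    (hd : EMetric.diam S ≠ ⊤) {u : ℝ} (hu : (EMetric.diam S).toReal < u) :
    ∃ y ρ, 0 < ρ ∧ ρ ≤ u ∧ S = Metric.ball y ρ := by
  obtain ⟨y, r, hr, rfl⟩ := hS
  refine ⟨y, min r u, lt_min hr (lt_of_le_of_lt ENNReal.toReal_nonneg hu), min_le_right _ _, ?_⟩
  apply Subset.antisymm
  · intro z hz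
    have hzy : edist z y ≤ EMetric.diam (Metric.ball y r) :=
      EMetric.edist_le_diam_of_mem hz (Metric.mem_ball_self hr)
    have h2 : dist z y ≤ (EMetric.diam (Metric.ball y r)).toReal := by
      rw [dist_edist]; exact ENNReal.toReal_mono hd hzy
    exact Metric.mem_ball.mpr (lt_min (Metric.mem_ball.mp hz) (lt_of_le_of_lt h2 hu))
  · exact Metric.ball_subset_ball (min_le_left _ _)

lemma diam_closedBall_eq_diam_ball {y : X} {δ ρ : ℝ}
    (hcont : ContinuousOn (fun r : ℝ => EMetric.diam (Metric.ball y r)) (Ioo 0 δ))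
    (hρ : ρ ∈ Ioo 0 δ) :
    EMetric.diam (Metric.closedBall y ρ) = EMetric.diam (Metric.ball y ρ) := by
  refine le_antisymm ?_ (EMetric.diam_mono Metric.ball_subset_closedBall)
  refine le_of_forall_gt_imp_ge_of_dense fun c hc => ?_
  have hne : (𝓝[Ioo ρ δ] ρ).NeBot := left_nhdsWithin_Ioo_neBot hρ.2
  have ht : Tendsto (fun r : ℝ => EMetric.diam (Metric.ball y r)) (𝓝[Ioo ρ δ] ρ)
      (𝓝 (EMetric.diam (Metric.ball y ρ))) :=
    (hcont ρ hρ).mono (Ioo_subset_Ioo hρ.1.le le_rfl)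
  obtain ⟨s, hsmem, hslt⟩ := (eventually_mem_nhdsWithin.and (ht.eventually_lt_const hc)).exists
  exact le_of_lt (lt_of_le_of_lt
    (EMetric.diam_mono (Metric.closedBall_subset_ball hsmem.1)) hslt)

lemma exists_ball_superset {y : X} {δ ρ : ℝ}
    (hcont : ContinuousOn (fun r : ℝ => EMetric.diam (Metric.ball y r)) (Ioo 0 δ))
    (hρ : ρ ∈ Ioo 0 δ) {c : ℝ≥0∞}
    (hc : EMetric.diam (Metric.closedBall y ρ) < c) :
    ∃ s, ρ < s ∧ EMetric.diam (Metric.ball y s) < c := by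
  rw [diam_closedBall_eq_diam_ball hcont hρ] at hc
  have hne : (𝓝[Ioo ρ δ] ρ).NeBot := left_nhdsWithin_Ioo_neBot hρ.2
  have ht : Tendsto (fun r : ℝ => EMetric.diam (Metric.ball y r)) (𝓝[Ioo ρ δ] ρ)
      (𝓝 (EMetric.diam (Metric.ball y ρ))) :=
    (hcont ρ hρ).mono (Ioo_subset_Ioo hρ.1.le le_rfl)
  obtain ⟨s, hsmem, hslt⟩ := (eventually_mem_nhdsWithin.and (ht.eventually_lt_const hc)).exists
  exact ⟨s, hsmem.1, hslt⟩

lemma inf_restrict {g : ℝ≥0∞ → ℝ≥0∞} (hg : Monotone g) {ε₀ : ℝ≥0∞} (hε₀ : 0 < ε₀) :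
    ⨅ (ε : ℝ≥0∞) (_ : 0 < ε), g ε = ⨅ (ε : ℝ≥0∞) (_ : 0 < ε ∧ ε ≤ ε₀), g ε := by
  apply le_antisymm
  · exact le_iInf₂ fun ε hε => iInf₂_le ε hε.1
  · refine le_iInf₂ fun ε hε => ?_
    exact le_trans (iInf₂_le (min ε ε₀) ⟨lt_min hε hε₀, min_le_right _ _⟩)
      (hg (min_le_left _ _))

end Aux

/-- on a diametrically regular metric space, the spherical Federer density
coincides with the Federer density computed with open balls. -/
theorem stmt12 {X : Type*} [MetricSpace X] (μ : MeasureTheory.OuterMeasure X)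
    (α cα : ℝ) (hα : 0 < α) (hc : 0 < cα) (A : Set X)
    (hX : DiametricallyRegular X)
    (h : CoversFinely (goodClass μ (closedBalls X) (zetaDiam cα α)) A) :
    ∀ x ∈ A, federerDensity μ (closedBalls X) (zetaDiam cα α) x =
      federerDensity μ (openBalls X) (zetaDiam cα α) x := by
  intro x hxA
  obtain ⟨R, hR, δ, hδ, hcont⟩ := hX x
  set ζ : Set X → ℝ≥0∞ := zetaDiam cα α with hζdef
  set m := min R δ with hmdef
  have hm0 : 0 < m := lt_min hR hδ
  set ε₀ : ℝ≥0∞ := ENNReal.ofReal m with hε₀def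
  have hε₀ : 0 < ε₀ := ENNReal.ofReal_pos.mpr hm0
  -- generic monotonicity of the inner sup
  have hmono : ∀ 𝒮 : Set (Set X), Monotone (fun ε : ℝ≥0∞ =>
      ⨆ (S : Set X) (_ : S ∈ goodClass μ 𝒮 ζ) (_ : x ∈ S) (_ : EMetric.diam S < ε),
        fedQuot μ ζ S) := by
    intro 𝒮 ε ε' hεε'
    refine iSup_mono fun S => iSup_mono fun _ => iSup_mono fun _ => ?_
    exact iSup_le fun hd => le_iSup (fun _ : EMetric.diam S < ε' => fedQuot μ ζ S)
      (lt_of_lt_of_le hd hεε')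
  -- the key equality of the two sups for small ε
  have key : ∀ ε : ℝ≥0∞, 0 < ε ∧ ε ≤ ε₀ →
      (⨆ (S : Set X) (_ : S ∈ goodClass μ (closedBalls X) ζ) (_ : x ∈ S)
        (_ : EMetric.diam S < ε), fedQuot μ ζ S) =
      (⨆ (S : Set X) (_ : S ∈ goodClass μ (openBalls X) ζ) (_ : x ∈ S)
        (_ : EMetric.diam S < ε), fedQuot μ ζ S) := by
    rintro ε ⟨hε, hεε₀⟩
    have hεtop : ε ≤ ENNReal.ofReal m := hεε₀
    apply le_antisymm
    · -- closed ≤ open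
      refine iSup_le fun S => iSup_le fun hS => iSup_le fun hxS => iSup_le fun hdS => ?_
      refine le_of_forall_lt fun lam hlam => ?_
      have hdε₀ : EMetric.diam S < ENNReal.ofReal m := lt_of_lt_of_le hdS hεtop
      have hdtop : EMetric.diam S ≠ ⊤ := hdε₀.ne_top
      have hdm : (EMetric.diam S).toReal < m := ENNReal.toReal_lt_of_lt_ofReal hdε₀
      obtain ⟨y, ρ, hρ0, hρu, rfl⟩ := closedBall_renorm hS.1 hdtop
        (show (EMetric.diam S).toReal < ((EMetric.diam S).toReal + m) / 2 by linarith)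
      have hρm : ρ < m := lt_of_le_of_lt hρu (by linarith)
      have hρδ : ρ ∈ Ioo 0 δ := ⟨hρ0, hρm.trans_le (min_le_right _ _)⟩
      have hyS : y ∈ Metric.closedBall y ρ := Metric.mem_closedBall_self hρ0.le
      have hyx : y ∈ Metric.ball x R := by
        rw [Metric.mem_ball, dist_comm, dist_edist]
        calc (edist x y).toReal
            ≤ (EMetric.diam (Metric.closedBall y ρ)).toReal :=
              ENNReal.toReal_mono hdtop (EMetric.edist_le_diam_of_mem hxS hyS)
          _ < m := hdm
          _ ≤ R := min_le_left _ _
      have hζS_ne_top : ζ (Metric.closedBall y ρ) ≠ ⊤ := zetaDiam_ne_top hα hdtop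
      have hlamtop : lam ≠ ⊤ := hlam.ne_top
      have hmuS : lam * ζ (Metric.closedBall y ρ) < μ (Metric.closedBall y ρ) := by
        by_cases hζ0 : ζ (Metric.closedBall y ρ) = 0
        · rw [hζ0, mul_zero]
          rcases eq_or_ne (μ (Metric.closedBall y ρ)) 0 with hμ | hμ
          · exact absurd (Or.inl ⟨hζ0, hμ⟩) hS.2
          · exact pos_iff_ne_zero.mpr hμ
        · rw [fedQuot, if_neg hζ0] at hlam
          exact (ENNReal.lt_div_iff_mul_lt (Or.inl hζ0) (Or.inl hζS_ne_top)).mp hlam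
      have hμS0 : μ (Metric.closedBall y ρ) ≠ 0 := fun h0 => by simp [h0] at hmuS
      have hcont2 : Continuous fun t : ℝ≥0∞ => lam * (ENNReal.ofReal cα * t ^ α) :=
        (ENNReal.continuous_const_mul hlamtop).comp
          ((ENNReal.continuous_const_mul ENNReal.ofReal_ne_top).comp
            ENNReal.continuous_rpow_const)
      have hmem : EMetric.diam (Metric.closedBall y ρ) ∈
          {t : ℝ≥0∞ | lam * (ENNReal.ofReal cα * t ^ α) < μ (Metric.closedBall y ρ)} := hmuS
      have hnb : (𝓝[>] EMetric.diam (Metric.closedBall y ρ)).NeBot :=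
        nhdsWithin_Ioi_neBot' ⟨⊤, lt_top_iff_ne_top.mpr hdtop⟩ le_rfl
      have hUn : ∀ᶠ t in 𝓝[>] (EMetric.diam (Metric.closedBall y ρ)),
          lam * (ENNReal.ofReal cα * t ^ α) < μ (Metric.closedBall y ρ) :=
        eventually_nhdsWithin_of_eventually_nhds
          ((isOpen_lt hcont2 continuous_const).eventually_mem hmem)
      obtain ⟨c', hc'gt, hc'⟩ := (eventually_mem_nhdsWithin.and hUn).exists
      obtain ⟨s, hρs, hfs⟩ := exists_ball_superset (hcont y hyx) hρδ
        (show EMetric.diam (Metric.closedBall y ρ) < min c' ε from lt_min hc'gt hdS)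
      have hfs1 : EMetric.diam (Metric.ball y s) < c' := hfs.trans_le (min_le_left _ _)
      have hfsε : EMetric.diam (Metric.ball y s) < ε := hfs.trans_le (min_le_right _ _)
      have hsub : Metric.closedBall y ρ ⊆ Metric.ball y s := Metric.closedBall_subset_ball hρs
      have hμT : μ (Metric.closedBall y ρ) ≤ μ (Metric.ball y s) := μ.mono hsub
      have hTopen : Metric.ball y s ∈ openBalls X := ⟨y, s, hρ0.trans hρs, rfl⟩
      have hdT_ne_top : EMetric.diam (Metric.ball y s) ≠ ⊤ := (hfsε.trans_le hεtop).ne_top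
      have hζT_ne_top : ζ (Metric.ball y s) ≠ ⊤ := zetaDiam_ne_top hα hdT_ne_top
      have hμT0 : μ (Metric.ball y s) ≠ 0 := fun h0 =>
        hμS0 (le_antisymm (h0 ▸ hμT) zero_le)
      have hTgood : Metric.ball y s ∈ goodClass μ (openBalls X) ζ := by
        refine ⟨hTopen, ?_⟩
        rintro (⟨-, hμ0⟩ | ⟨hζtop, -⟩)
        · exact hμT0 hμ0
        · exact hζT_ne_top hζtop
      have hζTle : lam * ζ (Metric.ball y s) < μ (Metric.ball y s) := by
        refine lt_of_le_of_lt ?_ (lt_of_lt_of_le hc' hμT)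
        have h1 : ζ (Metric.ball y s)
            = ENNReal.ofReal cα * (EMetric.diam (Metric.ball y s)) ^ α := rfl
        rw [h1]
        exact mul_le_mul_right
          (mul_le_mul_right (ENNReal.rpow_le_rpow hfs1.le hα.le) _) lam
      have hlamT : lam < fedQuot μ ζ (Metric.ball y s) := by
        rw [fedQuot]
        split_ifs with hζ0
        · exact lt_top_iff_ne_top.mpr hlamtop
        · exact (ENNReal.lt_div_iff_mul_lt (Or.inl hζ0) (Or.inl hζT_ne_top)).mpr hζTle
      exact lt_of_lt_of_le hlamT (le_iSup_of_le (Metric.ball y s) (le_iSup_of_le hTgood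
        (le_iSup_of_le (hsub hxS) (le_iSup_of_le hfsε le_rfl))))
    · -- open ≤ closed
      refine iSup_le fun T => iSup_le fun hT => iSup_le fun hxT => iSup_le fun hdT => ?_
      have hdε₀ : EMetric.diam T < ENNReal.ofReal m := lt_of_lt_of_le hdT hεtop
      have hdtop : EMetric.diam T ≠ ⊤ := hdε₀.ne_top
      have hdm : (EMetric.diam T).toReal < m := ENNReal.toReal_lt_of_lt_ofReal hdε₀
      obtain ⟨y, ρ, hρ0, hρu, rfl⟩ := openBall_renorm hT.1 hdtop
        (show (EMetric.diam T).toReal < ((EMetric.diam T).toReal + m) / 2 by linarith)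
      have hρm : ρ < m := lt_of_le_of_lt hρu (by linarith)
      have hρδ : ρ ∈ Ioo 0 δ := ⟨hρ0, hρm.trans_le (min_le_right _ _)⟩
      have hyT : y ∈ Metric.ball y ρ := Metric.mem_ball_self hρ0
      have hyx : y ∈ Metric.ball x R := by
        rw [Metric.mem_ball, dist_comm, dist_edist]
        calc (edist x y).toReal
            ≤ (EMetric.diam (Metric.ball y ρ)).toReal :=
              ENNReal.toReal_mono hdtop (EMetric.edist_le_diam_of_mem hxT hyT)
          _ < m := hdm
          _ ≤ R := min_le_left _ _
      have hdiameq : EMetric.diam (Metric.closedBall y ρ) = EMetric.diam (Metric.ball y ρ) :=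
        diam_closedBall_eq_diam_ball (hcont y hyx) hρδ
      have hζeq : ζ (Metric.closedBall y ρ) = ζ (Metric.ball y ρ) := by
        have h1 : ζ (Metric.closedBall y ρ)
            = ENNReal.ofReal cα * (EMetric.diam (Metric.closedBall y ρ)) ^ α := rfl
        have h2 : ζ (Metric.ball y ρ)
            = ENNReal.ofReal cα * (EMetric.diam (Metric.ball y ρ)) ^ α := rfl
        rw [h1, h2, hdiameq]
      have hμle : μ (Metric.ball y ρ) ≤ μ (Metric.closedBall y ρ) :=
        μ.mono Metric.ball_subset_closedBall
      have hSgood : Metric.closedBall y ρ ∈ goodClass μ (closedBalls X) ζ := by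
        refine ⟨⟨y, ρ, hρ0, rfl⟩, ?_⟩
        rintro (⟨hζ0, hμ0⟩ | ⟨hζtop, -⟩)
        · exact hT.2 (Or.inl ⟨hζeq.symm.trans hζ0,
            le_antisymm (hμ0 ▸ hμle) zero_le⟩)
        · exact zetaDiam_ne_top hα (by rw [hdiameq]; exact hdtop) hζtop
      have hq : fedQuot μ ζ (Metric.ball y ρ) ≤ fedQuot μ ζ (Metric.closedBall y ρ) := by
        simp only [fedQuot, hζeq]
        split_ifs with h0
        · exact le_rfl
        · exact ENNReal.div_le_div_right hμle _
      exact le_trans hq (le_iSup_of_le (Metric.closedBall y ρ) (le_iSup_of_le hSgood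
        (le_iSup_of_le (Metric.ball_subset_closedBall hxT)
          (le_iSup_of_le (by rw [hdiameq]; exact hdT) le_rfl))))
  calc federerDensity μ (closedBalls X) ζ x
      = ⨅ (ε : ℝ≥0∞) (_ : 0 < ε ∧ ε ≤ ε₀),
          ⨆ (S : Set X) (_ : S ∈ goodClass μ (closedBalls X) ζ) (_ : x ∈ S)
            (_ : EMetric.diam S < ε), fedQuot μ ζ S :=
        inf_restrict (hmono _) hε₀
    _ = ⨅ (ε : ℝ≥0∞) (_ : 0 < ε ∧ ε ≤ ε₀),
          ⨆ (S : Set X) (_ : S ∈ goodClass μ (openBalls X) ζ) (_ : x ∈ S)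
            (_ : EMetric.diam S < ε), fedQuot μ ζ S :=
        iInf_congr fun ε => iInf_congr fun hε => key ε hε
    _ = federerDensity μ (openBalls X) ζ x := (inf_restrict (hmono _) hε₀).symm
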